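/- Let X and Z be independent random variables, each exponentially distributed with rate 1, and let a > 0, b > 0, t ≥ 1 be real numbers. Then the probability that (1 + a·X)/(1 + b·Z) ≥ t equals exp(−(t − 1)/a) · (1 + (t/a)·b)^{−1}. -/

import Mathlib

open MeasureTheory ProbabilityTheory Real

lemma expMeasure_eq_withDensity :
    expMeasure 1 = volume.withDensity (exponentialPDF 1) := rfl

lemma expMeasure_Ici {c : ℝ} (hc : 0 ≤ c) :
    expMeasure 1 (Set.Ici c) = ENNReal.ofReal (Real.exp (-c)) := by
  rw [expMeasure_eq_withDensity, withDensity_apply _ measurableSet_Ici,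
    ← restrict_Ioi_eq_restrict_Ici]
  have h1 : ∀ x ∈ Set.Ioi c, exponentialPDF 1 x = ENNReal.ofReal (Real.exp (-x)) := by
    intro x hx
    rw [exponentialPDF_of_nonneg (le_trans hc (le_of_lt hx))]
    norm_num
  rw [setLIntegral_congr_fun measurableSet_Ioi h1,
    ← ofReal_integral_eq_lintegral_ofReal]
  · rw [integral_exp_neg_Ioi]
  · simpa [IntegrableOn] using exp_neg_integrableOn_Ioi c one_pos
  · exact Filter.Eventually.of_forall fun x => (Real.exp_pos _).le

/-- Complementary CDF of the SNR ratio `(1 + a·X)/(1 + b·Z)` at a threshold `t ≥ 1`,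
where `X` and `Z` are independent unit-rate exponential random variables, modeled as the
two coordinates of the product of two unit-rate exponential measures. -/
theorem ccdf_snr_ratio (a b t : ℝ) (ha : 0 < a) (hb : 0 < b) (ht : 1 ≤ t) :
    ((expMeasure 1).prod (expMeasure 1))
      {p : ℝ × ℝ | (1 + a * p.1) / (1 + b * p.2) ≥ t}
      = ENNReal.ofReal (Real.exp (-(t - 1) / a) * (1 + (t / a) * b)⁻¹) := by
  have hprob : IsProbabilityMeasure (expMeasure 1) := isProbabilityMeasure_expMeasure one_pos
  set k : ℝ := t * b / a + 1 with hk_def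
  have ht0 : (0:ℝ) < t := lt_of_lt_of_le one_pos ht
  have hk : 0 < k := by positivity
  have hS : MeasurableSet {p : ℝ × ℝ | (1 + a * p.1) / (1 + b * p.2) ≥ t} := by
    have : Measurable fun p : ℝ × ℝ => (1 + a * p.1) / (1 + b * p.2) := by fun_prop
    exact measurableSet_le measurable_const this
  rw [Measure.prod_apply_symm hS]
  -- a.e. z is nonneg
  have hae : ∀ᵐ z ∂(expMeasure 1), 0 ≤ z := by
    rw [ae_iff]
    have : {z : ℝ | ¬ 0 ≤ z} = Set.Iio 0 := by ext z; simp
    rw [this, expMeasure_eq_withDensity, withDensity_apply _ measurableSet_Iio]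
    exact lintegral_exponentialPDF_of_nonpos le_rfl
  have hcongr : ∀ᵐ z ∂(expMeasure 1),
      (expMeasure 1) ((fun x => (x, z)) ⁻¹' {p : ℝ × ℝ | (1 + a * p.1) / (1 + b * p.2) ≥ t})
        = ENNReal.ofReal (Real.exp (-((t * (1 + b * z) - 1) / a))) := by
    filter_upwards [hae] with z hz
    have hd : (0:ℝ) < 1 + b * z := by nlinarith
    have hset : ((fun x => (x, z)) ⁻¹' {p : ℝ × ℝ | (1 + a * p.1) / (1 + b * p.2) ≥ t})
        = Set.Ici ((t * (1 + b * z) - 1) / a) := by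
      ext x
      simp only [Set.mem_preimage, Set.mem_setOf_eq, Set.mem_Ici, ge_iff_le]
      rw [le_div_iff₀ hd, div_le_iff₀ ha]
      constructor <;> intro h <;> nlinarith
    rw [hset, expMeasure_Ici]
    have : (1:ℝ) ≤ t * (1 + b * z) := by nlinarith
    have h1 : 0 ≤ t * (1 + b * z) - 1 := by linarith
    positivity
  rw [lintegral_congr_ae hcongr, expMeasure_eq_withDensity,
    lintegral_withDensity_eq_lintegral_mul _
      (show Measurable (exponentialPDF 1) from (measurable_exponentialPDFReal 1).ennreal_ofReal)
      (by fun_prop)]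
  have hC : (0:ℝ) ≤ Real.exp (-(t - 1) / a) := (Real.exp_pos _).le
  have hiden : ∀ z : ℝ, exponentialPDF 1 z * ENNReal.ofReal (Real.exp (-((t * (1 + b * z) - 1) / a)))
      = ENNReal.ofReal (Real.exp (-(t - 1) / a)) * (ENNReal.ofReal k)⁻¹ * exponentialPDF k z := by
    intro z
    rcases lt_or_ge z 0 with hz | hz
    · rw [exponentialPDF_of_neg hz, exponentialPDF_of_neg hz, zero_mul, mul_zero]
    · rw [exponentialPDF_of_nonneg hz, exponentialPDF_of_nonneg hz]
      rw [ENNReal.ofReal_mul hk.le, ← mul_assoc,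
        mul_assoc (ENNReal.ofReal (Real.exp (-(t - 1) / a))),
        ENNReal.inv_mul_cancel (ENNReal.ofReal_pos.mpr hk).ne' ENNReal.ofReal_ne_top, mul_one,
        ← ENNReal.ofReal_mul (by positivity), ← ENNReal.ofReal_mul hC,
        ← Real.exp_add]
      congr 1
      rw [one_mul, ← Real.exp_add]
      congr 1
      rw [hk_def]
      ring
  simp only [Pi.mul_apply]
  rw [lintegral_congr hiden, lintegral_const_mul _
      (show Measurable (exponentialPDF k) from (measurable_exponentialPDFReal k).ennreal_ofReal),
    lintegral_exponentialPDF_eq_one hk, mul_one]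
  rw [ENNReal.ofReal_mul hC]
  congr 1
  rw [← ENNReal.ofReal_inv_of_pos hk]
  congr 1
  rw [hk_def, div_mul_eq_mul_div, add_comm]
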